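/- Suppose g ∈ H satisfies: there exists c ∈ ℂ^n with ‖g − F c‖_H ≤ Cε and ‖c‖_{ℓ²} ≤ B. Then the TSVD approximation Q_ε g satisfies ‖g − Q_ε g‖_H ≤ (C + B) ε. -/

import Mathlib

open scoped InnerProductSpace Classical

/-- The norm squared of a finite orthonormal linear combination. -/
lemma aux_norm_sq {H : Type*} [NormedAddCommGroup H] [InnerProductSpace ℂ H]
    {ι : Type*} {u : ι → H} (hu : Orthonormal ℂ u) (s : Finset ι) (l : ι → ℂ) :
    ‖∑ j ∈ s, l j • u j‖ ^ 2 = ∑ j ∈ s, ‖l j‖ ^ 2 := by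
  classical
  have h : (⟪∑ j ∈ s, l j • u j, ∑ j ∈ s, l j • u j⟫_ℂ)
      = (∑ j ∈ s, (‖l j‖ : ℂ) ^ 2) := by
    rw [sum_inner]
    refine Finset.sum_congr rfl fun j hj => ?_
    rw [inner_smul_left, hu.inner_right_sum l hj, RCLike.conj_mul]
    norm_cast
  have h2 := inner_self_eq_norm_sq (𝕜 := ℂ) (∑ j ∈ s, l j • u j)
  rw [h] at h2
  rw [← h2, map_sum]
  refine Finset.sum_congr rfl fun j _ => ?_
  norm_cast

/-- Projection onto a finite orthonormal family is a contraction of the residual. -/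
lemma aux_contraction {H : Type*} [NormedAddCommGroup H] [InnerProductSpace ℂ H]
    {ι : Type*} {u : ι → H} (hu : Orthonormal ℂ u) (s : Finset ι) (x : H) :
    ‖x - ∑ j ∈ s, ⟪u j, x⟫_ℂ • u j‖ ≤ ‖x‖ := by
  classical
  set p := ∑ j ∈ s, ⟪u j, x⟫_ℂ • u j with hp
  have horth : ⟪p, x - p⟫_ℂ = 0 := by
    rw [inner_sub_right]
    have h1 : ⟪p, x⟫_ℂ = ∑ j ∈ s, (starRingEnd ℂ) ⟪u j, x⟫_ℂ * ⟪u j, x⟫_ℂ := by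
      rw [hp, sum_inner]
      refine Finset.sum_congr rfl fun j hj => ?_
      rw [inner_smul_left]
    have h2 : ⟪p, p⟫_ℂ = ∑ j ∈ s, (starRingEnd ℂ) ⟪u j, x⟫_ℂ * ⟪u j, x⟫_ℂ := by
      rw [hp, sum_inner]
      refine Finset.sum_congr rfl fun j hj => ?_
      rw [inner_smul_left, hu.inner_right_sum _ hj]
    rw [h1, h2, sub_self]
  have hpyth : ‖p + (x - p)‖ * ‖p + (x - p)‖ = ‖p‖ * ‖p‖ + ‖x - p‖ * ‖x - p‖ :=
    norm_add_sq_eq_norm_sq_add_norm_sq_of_inner_eq_zero p (x - p) horth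
  have hx : p + (x - p) = x := by abel
  rw [hx] at hpyth
  have h1 : (0:ℝ) ≤ ‖p‖ := norm_nonneg _
  have h2 : (0:ℝ) ≤ ‖x - p‖ := norm_nonneg _
  have h3 : (0:ℝ) ≤ ‖x‖ := norm_nonneg _
  nlinarith

/-- Corollary of Lemma 2.1: if some `c ∈ ℂⁿ` satisfies `‖g − F c‖ ≤ Cε` and `‖c‖ ≤ B`,
then the TSVD approximation satisfies `‖g − Q_ε g‖ ≤ (C + B) ε`. -/
theorem stmt_13 {H : Type*} [NormedAddCommGroup H] [InnerProductSpace ℂ H]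
    {n : ℕ} (F : EuclideanSpace ℂ (Fin n) →ₗ[ℂ] H)
    (σ : Fin n → ℝ) (v : Fin n → EuclideanSpace ℂ (Fin n)) (u : Fin n → H)
    (hσ : ∀ j, 0 ≤ σ j) (hv : Orthonormal ℂ v) (hu : Orthonormal ℂ u)
    (hF : ∀ c, F c = ∑ j, (σ j : ℂ) • (⟪v j, c⟫_ℂ • u j))
    (ε C B : ℝ) (hε : 0 < ε) (hC : 0 ≤ C) (hB : 0 ≤ B) (g : H)
    (hc : ∃ c : EuclideanSpace ℂ (Fin n), ‖g - F c‖ ≤ C * ε ∧ ‖c‖ ≤ B) :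
    ‖g - ∑ j ∈ Finset.univ.filter (fun j => ε < σ j), ⟪u j, g⟫_ℂ • u j‖
      ≤ (C + B) * ε := by
  classical
  obtain ⟨c, h1, h2⟩ := hc
  set S := Finset.univ.filter (fun j => ε < σ j) with hS
  set l : Fin n → ℂ := fun j => (σ j : ℂ) * ⟪v j, c⟫_ℂ with hl
  have hFc : F c = ∑ j, l j • u j := by
    rw [hF]
    exact Finset.sum_congr rfl fun j _ => (smul_smul _ _ _)
  have hinner : ∀ j, ⟪u j, F c⟫_ℂ = l j := by
    intro j
    rw [hFc]
    exact hu.inner_right_fintype l j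
  set d := g - F c with hd
  -- decompose
  have hsplit : g - ∑ j ∈ S, ⟪u j, g⟫_ℂ • u j
      = (d - ∑ j ∈ S, ⟪u j, d⟫_ℂ • u j) + (F c - ∑ j ∈ S, ⟪u j, F c⟫_ℂ • u j) := by
    have hsum : ∑ j ∈ S, ⟪u j, g⟫_ℂ • u j
        = (∑ j ∈ S, ⟪u j, d⟫_ℂ • u j) + ∑ j ∈ S, ⟪u j, F c⟫_ℂ • u j := by
      rw [← Finset.sum_add_distrib]
      refine Finset.sum_congr rfl fun j _ => ?_
      rw [← add_smul]
      congr 1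
      rw [hd, inner_sub_right]
      ring
    rw [hsum, hd]; abel
  rw [hsplit]
  have hbound1 : ‖d - ∑ j ∈ S, ⟪u j, d⟫_ℂ • u j‖ ≤ C * ε := by
    calc ‖d - ∑ j ∈ S, ⟪u j, d⟫_ℂ • u j‖ ≤ ‖d‖ := aux_contraction hu S d
    _ ≤ C * ε := h1
  -- second term
  have hsecond : F c - ∑ j ∈ S, ⟪u j, F c⟫_ℂ • u j
      = ∑ j ∈ Finset.univ.filter (fun j => ¬ ε < σ j), l j • u j := by
    have := Finset.sum_filter_add_sum_filter_not Finset.univ (fun j => ε < σ j)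
      (fun j => l j • u j)
    have hsum2 : ∑ j ∈ S, ⟪u j, F c⟫_ℂ • u j = ∑ j ∈ S, l j • u j :=
      Finset.sum_congr rfl fun j _ => by rw [hinner]
    rw [hsum2, hFc, ← this, hS]
    abel
  have hbound2 : ‖F c - ∑ j ∈ S, ⟪u j, F c⟫_ℂ • u j‖ ≤ B * ε := by
    rw [hsecond]
    set T := Finset.univ.filter (fun j => ¬ ε < σ j) with hT
    have hnsq : ‖∑ j ∈ T, l j • u j‖ ^ 2 = ∑ j ∈ T, ‖l j‖ ^ 2 := aux_norm_sq hu T l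
    have hterm : ∀ j ∈ T, ‖l j‖ ^ 2 ≤ ε ^ 2 * ‖⟪v j, c⟫_ℂ‖ ^ 2 := by
      intro j hj
      have hje : σ j ≤ ε := by
        simp only [hT, Finset.mem_filter] at hj
        exact le_of_not_gt hj.2
      have : ‖l j‖ = σ j * ‖⟪v j, c⟫_ℂ‖ := by
        rw [hl]
        simp only [norm_mul, Complex.norm_real, Real.norm_eq_abs, abs_of_nonneg (hσ j)]
      rw [this, mul_pow]
      have h0 : (0:ℝ) ≤ ‖⟪v j, c⟫_ℂ‖ ^ 2 := by positivity
      have : σ j ^ 2 ≤ ε ^ 2 := by nlinarith [hσ j]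
      nlinarith
    have hsum_le : ∑ j ∈ T, ‖l j‖ ^ 2 ≤ ε ^ 2 * ∑ j ∈ T, ‖⟪v j, c⟫_ℂ‖ ^ 2 := by
      rw [Finset.mul_sum]
      exact Finset.sum_le_sum hterm
    have hbessel : ∑ j ∈ T, ‖⟪v j, c⟫_ℂ‖ ^ 2 ≤ ‖c‖ ^ 2 := by
      have hs1 : ∑ j ∈ T, ‖⟪v j, c⟫_ℂ‖ ^ 2 ≤ ∑ j : Fin n, ‖⟪v j, c⟫_ℂ‖ ^ 2 :=
        Finset.sum_le_sum_of_subset_of_nonneg (Finset.subset_univ T)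
          fun j _ _ => by positivity
      have hs2 : ∑ j : Fin n, ‖⟪v j, c⟫_ℂ‖ ^ 2 ≤ ‖c‖ ^ 2 := Orthonormal.sum_inner_products_le c hv
      linarith
    have hcB : ‖c‖ ^ 2 ≤ B ^ 2 := by nlinarith [norm_nonneg c]
    have hfinal : ‖∑ j ∈ T, l j • u j‖ ^ 2 ≤ (B * ε) ^ 2 := by
      rw [hnsq]
      calc ∑ j ∈ T, ‖l j‖ ^ 2 ≤ ε ^ 2 * ‖c‖ ^ 2 := by nlinarith [sq_nonneg ε]
      _ ≤ (B * ε) ^ 2 := by nlinarith [sq_nonneg ε]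
    have hn0 : (0:ℝ) ≤ ‖∑ j ∈ T, l j • u j‖ := norm_nonneg _
    nlinarith [mul_nonneg hB hε.le, sq_nonneg (‖∑ j ∈ T, l j • u j‖ - B * ε),
      sq_nonneg (‖∑ j ∈ T, l j • u j‖ + B * ε)]
  calc ‖(d - ∑ j ∈ S, ⟪u j, d⟫_ℂ • u j) + (F c - ∑ j ∈ S, ⟪u j, F c⟫_ℂ • u j)‖
      ≤ ‖d - ∑ j ∈ S, ⟪u j, d⟫_ℂ • u j‖ + ‖F c - ∑ j ∈ S, ⟪u j, F c⟫_ℂ • u j‖ :=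
        norm_add_le _ _
  _ ≤ C * ε + B * ε := add_le_add hbound1 hbound2
  _ = (C + B) * ε := by ring
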